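/- The error in the quadratic approximation of the maximal game length satisfies n²/2 − M(n) = Θ(n·log_φ(n)): there exist constants c₁, c₂ > 0 and N such that for all n ≥ N, c₁·n·log_φ(n) ≤ n²/2 − M(n) ≤ c₂·n·log_φ(n), where φ = (1+√5)/2 is the golden ratio. -/

import Mathlib

/-- Fibonacci numbers indexed so that `F 1 = 1`, `F 2 = 2`,
and `F (i+1) = F i + F (i-1)`. -/
def F (i : ℕ) : ℕ := Nat.fib (i + 1)

/-- A single legal move of the ordered Zeckendorf game, acting on an
adjacent pair of entries of the list of indices. -/
inductive Move : List ℕ → List ℕ → Prop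
  | merge (a b : List ℕ) (i : ℕ) (hi : 1 ≤ i) :
      Move (a ++ [i, i + 1] ++ b) (a ++ [i + 2] ++ b)
  | mergeOnes (a b : List ℕ) :
      Move (a ++ [1, 1] ++ b) (a ++ [2] ++ b)
  | split (a b : List ℕ) (i : ℕ) (hi : 2 < i) :
      Move (a ++ [i, i] ++ b) (a ++ [i - 2, i + 1] ++ b)
  | splitTwos (a b : List ℕ) :
      Move (a ++ [2, 2] ++ b) (a ++ [1, 3] ++ b)
  | switch (a b : List ℕ) (i j : ℕ) (hj : 1 ≤ j) (hij : j < i) :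
      Move (a ++ [i, j] ++ b) (a ++ [j, i] ++ b)

/-- A play of the ordered Zeckendorf game on `n` with `m` moves:
the initial state is `n` copies of `1`, and each step is a legal move. -/
def IsPlay (n : ℕ) (s : ℕ → List ℕ) (m : ℕ) : Prop :=
  s 0 = List.replicate n 1 ∧ ∀ t < m, Move (s t) (s (t + 1))

/-- A state is terminal if no legal move applies to it. -/
def Terminal (S : List ℕ) : Prop := ∀ T, ¬ Move S T

/-- The total Fibonacci value of a state. -/
def val (S : List ℕ) : ℕ := (S.map F).sum

/-- The monovariant `f(S) = Σ_{j=1}^k (k+1−j)·F_{i_j}` (here with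
`j` running over 0-based positions, so the weight of position `j` is
`k − j`). -/
def f (S : List ℕ) : ℕ := ∑ j : Fin S.length, (S.length - (j : ℕ)) * F (S.get j)

/-- `M n` is the maximal number of moves in a completed play of the
ordered Zeckendorf game on `n`. -/
noncomputable def M (n : ℕ) : ℕ :=
  sSup {m | ∃ s : ℕ → List ℕ, IsPlay n s m ∧ Terminal (s m)}

/-- The golden ratio `φ = (1+√5)/2`. -/
noncomputable def phi : ℝ := (1 + Real.sqrt 5) / 2

/-- Logarithm to base `φ`. -/
noncomputable def logphi (x : ℝ) : ℝ := Real.log x / Real.log phi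


/-! ### Basic facts about `F`, `val`, and the monovariant -/

lemma F_pos (i : ℕ) : 1 ≤ F i := Nat.fib_pos.2 (Nat.succ_pos i)

lemma F_add_two (i : ℕ) : F (i + 2) = F (i + 1) + F i := by
  show Nat.fib (i + 3) = Nat.fib (i + 2) + Nat.fib (i + 1)
  rw [show i + 3 = (i+1) + 2 by omega, Nat.fib_add_two]
  rw [show i + 2 = (i+1) + 1 by omega]
  omega

lemma F_mono : Monotone F := fun a b h => Nat.fib_mono (by omega)

lemma F_strict {i j : ℕ} (hi : 1 ≤ i) (hij : i < j) : F i < F j := by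
  induction j with
  | zero => omega
  | succ k ih =>
    rcases Nat.lt_or_ge i k with h | h
    · exact lt_of_lt_of_le (ih h) (F_mono (Nat.le_succ k))
    · have : i = k := by omega
      subst this
      exact Nat.fib_lt_fib_succ (by omega)

lemma F_one : F 1 = 1 := rfl
lemma F_two : F 2 = 2 := rfl
lemma F_three : F 3 = 3 := rfl

lemma F_le_two_pow (i : ℕ) : F i ≤ 2 ^ i := by
  induction i using Nat.strong_induction_on with
  | _ i ih =>
    match i with
    | 0 => decide
    | 1 => decide
    | (k+2) =>
      have h1 := ih (k+1) (by omega)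
      have h2 := ih k (by omega)
      have := F_add_two k
      have : F (k+2) ≤ 2^(k+1) + 2^k := by omega
      calc F (k+2) ≤ 2^(k+1) + 2^k := this
        _ ≤ 2^(k+2) := by ring_nf; omega

lemma two_pow_le_F (m : ℕ) : 2 ^ m ≤ F (2 * m) := by
  induction m with
  | zero => decide
  | succ k ih =>
    have h1 : F (2*k+2) = F (2*k+1) + F (2*k) := F_add_two _
    have h2 : F (2*k) ≤ F (2*k+1) := F_mono (by omega)
    have : 2 * (k+1) = 2*k + 2 := by ring
    rw [this, h1]
    have : 2 ^ (k+1) = 2^k + 2^k := by ring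
    omega

/-- recursive version of the monovariant -/
def fw : List ℕ → ℕ
  | [] => 0
  | x :: t => (t.length + 1) * F x + fw t

lemma val_nil : val [] = 0 := rfl
lemma val_cons (x : ℕ) (t : List ℕ) : val (x :: t) = F x + val t := rfl

lemma val_append (u v : List ℕ) : val (u ++ v) = val u + val v := by
  simp [val]

lemma f_eq_fw (S : List ℕ) : f S = fw S := by
  induction S with
  | nil => simp [f, fw]
  | cons x t ih =>
    rw [f]
    simp only [List.length_cons]
    rw [Fin.sum_univ_succ]
    rw [fw, ← ih, f]
    congr 1
    apply Finset.sum_congr rfl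
    intro j _
    have hj : (j : ℕ) < t.length := j.isLt
    have h2 : t.length + 1 - ((j : ℕ) + 1) = t.length - (j : ℕ) := by omega
    simp [h2]

lemma fw_append (u v : List ℕ) : fw (u ++ v) = fw u + v.length * val u + fw v := by
  induction u with
  | nil => simp [fw, val]
  | cons x t ih =>
    show ((t ++ v).length + 1) * F x + fw (t ++ v) =
      ((t.length + 1) * F x + fw t) + v.length * (F x + val t) + fw v
    rw [ih, List.length_append]; ring

lemma fw_le_len_mul_val (S : List ℕ) : fw S ≤ S.length * val S := by
  induction S with
  | nil => simp [fw]
  | cons x t ih =>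
    simp only [fw, List.length_cons, val_cons]
    have h : val t ≤ val (x :: t) := by simp [val_cons]
    nlinarith [@List.length_cons _ x t, Nat.zero_le (F x), Nat.zero_le (val t), ih]

lemma val_le_fw (S : List ℕ) : val S ≤ fw S := by
  induction S with
  | nil => simp [fw, val]
  | cons x t ih =>
    simp only [fw, val_cons]
    nlinarith [F_pos x]

lemma fw_replicate_one (n : ℕ) : 2 * fw (List.replicate n 1) = n * (n + 1) := by
  induction n with
  | zero => simp [fw]
  | succ k ih =>
    rw [List.replicate_succ, fw]
    simp only [List.length_replicate, F_one]
    ring_nf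
    ring_nf at ih
    omega

lemma val_replicate_one (n : ℕ) : val (List.replicate n 1) = n := by
  induction n with
  | zero => rfl
  | succ k ih => rw [List.replicate_succ, val_cons, ih, F_one]; omega

/-! ### Moves: value preservation and drop of the monovariant -/

lemma fw_mid (a m b : List ℕ) :
    fw (a ++ m ++ b) = fw a + (m.length + b.length) * val a + fw m + b.length * val m + fw b := by
  rw [List.append_assoc, fw_append, fw_append, List.length_append]
  ring

lemma val_mid (a m b : List ℕ) : val (a ++ m ++ b) = val a + val m + val b := by
  rw [List.append_assoc, val_append, val_append]; ring

lemma fw_pair (x y : ℕ) : fw [x, y] = 2 * F x + F y := by simp [fw]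

lemma mem_mid {x : ℕ} {a m b : List ℕ} : x ∈ a ++ m ++ b ↔ x ∈ a ∨ x ∈ m ∨ x ∈ b := by
  simp [List.mem_append, or_assoc]
lemma fw_single (x : ℕ) : fw [x] = F x := by simp [fw]
lemma val_pair (x y : ℕ) : val [x, y] = F x + F y := by simp [val]
lemma val_single (x : ℕ) : val [x] = F x := rfl

lemma Move.val_eq {S T : List ℕ} (h : Move S T) : val S = val T := by
  induction h with
  | merge a b i hi =>
    rw [val_mid, val_mid, val_pair, val_single, F_add_two]; ring
  | mergeOnes a b =>
    rw [val_mid, val_mid, val_pair, val_single, F_one, F_two]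
  | split a b i hi =>
    rw [val_mid, val_mid, val_pair, val_pair]
    obtain ⟨k, rfl⟩ : ∃ k, i = k + 3 := ⟨i - 3, by omega⟩
    have h1 : k + 3 - 2 = k + 1 := by omega
    rw [h1]
    have h2 : F (k + 3) = F (k + 2) + F (k + 1) := F_add_two (k+1)
    have h3 : F (k + 4) = F (k + 3) + F (k + 2) := F_add_two (k+2)
    have h4 : F (k + 3 + 1) = F (k + 4) := rfl
    omega
  | splitTwos a b =>
    rw [val_mid, val_mid, val_pair, val_pair, F_one, F_two, F_three]
  | switch a b i j hj hij => rw [val_mid, val_mid, val_pair, val_pair]; ring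

/-- exact drop of the monovariant for each move -/
lemma Move.fw_drop {S T : List ℕ} (h : Move S T) : fw T < fw S := by
  induction h with
  | merge a b i hi =>
    rw [fw_mid, fw_mid, fw_pair, fw_single, val_pair, val_single, F_add_two]
    have := F_pos i
    simp only [List.length_cons, List.length_nil]
    nlinarith [Nat.zero_le (val a), Nat.zero_le b.length]
  | mergeOnes a b =>
    rw [fw_mid, fw_mid, fw_pair, fw_single, val_pair, val_single, F_one, F_two]
    simp only [List.length_cons, List.length_nil]
    nlinarith [Nat.zero_le (val a), Nat.zero_le b.length]
  | split a b i hi =>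
    rw [fw_mid, fw_mid, fw_pair, fw_pair, val_pair, val_pair]
    obtain ⟨k, rfl⟩ : ∃ k, i = k + 3 := ⟨i - 3, by omega⟩
    have h1 : k + 3 - 2 = k + 1 := by omega
    rw [h1]
    have h2 : F (k + 3) = F (k + 2) + F (k + 1) := F_add_two (k+1)
    have h3 : F (k + 4) = F (k + 3) + F (k + 2) := F_add_two (k+2)
    have h4 := F_pos (k+2)
    have h5 : F (k + 3 + 1) = F (k + 4) := rfl
    have h6 : F (k+1) + F (k+4) = 2 * F (k+3) := by omega
    simp only [List.length_cons, List.length_nil, h5]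
    nlinarith [Nat.zero_le (val a), Nat.zero_le b.length, F_pos (k+1)]
  | splitTwos a b =>
    rw [fw_mid, fw_mid, fw_pair, fw_pair, val_pair, val_pair, F_one, F_two, F_three]
    simp only [List.length_cons, List.length_nil]
    omega
  | switch a b i j hj hij =>
    rw [fw_mid, fw_mid, fw_pair, fw_pair, val_pair, val_pair]
    have := F_strict hj hij
    rw [show F j + F i = F i + F j from by ring]
    simp only [List.length_cons, List.length_nil]
    omega

lemma Move.pos {S T : List ℕ} (h : Move S T) (hS : ∀ x ∈ S, 1 ≤ x) :
    ∀ x ∈ T, 1 ≤ x := by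
  induction h <;>
    (intro x hx
     rw [mem_mid] at hx
     rcases hx with h | h | h
     · exact hS x (mem_mid.2 (Or.inl h))
     · simp only [List.mem_cons, List.not_mem_nil, or_false] at h; omega
     · exact hS x (mem_mid.2 (Or.inr (Or.inr h))))

/-- moves can be embedded in a context -/
lemma Move.embed {S T : List ℕ} (h : Move S T) (u v : List ℕ) :
    Move (u ++ S ++ v) (u ++ T ++ v) := by
  induction h with
  | merge a b i hi =>
    have e1 : u ++ (a ++ [i, i+1] ++ b) ++ v = (u ++ a) ++ [i, i+1] ++ (b ++ v) := by
      simp [List.append_assoc]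
    have e2 : u ++ (a ++ [i+2] ++ b) ++ v = (u ++ a) ++ [i+2] ++ (b ++ v) := by
      simp [List.append_assoc]
    rw [e1, e2]; exact Move.merge _ _ i hi
  | mergeOnes a b =>
    have e1 : u ++ (a ++ [1,1] ++ b) ++ v = (u ++ a) ++ [1,1] ++ (b ++ v) := by
      simp [List.append_assoc]
    have e2 : u ++ (a ++ [2] ++ b) ++ v = (u ++ a) ++ [2] ++ (b ++ v) := by
      simp [List.append_assoc]
    rw [e1, e2]; exact Move.mergeOnes _ _
  | split a b i hi =>
    have e1 : u ++ (a ++ [i, i] ++ b) ++ v = (u ++ a) ++ [i, i] ++ (b ++ v) := by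
      simp [List.append_assoc]
    have e2 : u ++ (a ++ [i-2, i+1] ++ b) ++ v = (u ++ a) ++ [i-2, i+1] ++ (b ++ v) := by
      simp [List.append_assoc]
    rw [e1, e2]; exact Move.split _ _ i hi
  | splitTwos a b =>
    have e1 : u ++ (a ++ [2,2] ++ b) ++ v = (u ++ a) ++ [2,2] ++ (b ++ v) := by
      simp [List.append_assoc]
    have e2 : u ++ (a ++ [1,3] ++ b) ++ v = (u ++ a) ++ [1,3] ++ (b ++ v) := by
      simp [List.append_assoc]
    rw [e1, e2]; exact Move.splitTwos _ _
  | switch a b i j hj hij =>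
    have e1 : u ++ (a ++ [i, j] ++ b) ++ v = (u ++ a) ++ [i, j] ++ (b ++ v) := by
      simp [List.append_assoc]
    have e2 : u ++ (a ++ [j, i] ++ b) ++ v = (u ++ a) ++ [j, i] ++ (b ++ v) := by
      simp [List.append_assoc]
    rw [e1, e2]; exact Move.switch _ _ i j hj hij

/-! ### Generic play machinery -/

def PlaysG (G : List ℕ → List ℕ → Prop) (S T : List ℕ) (m : ℕ) : Prop :=
  ∃ s : ℕ → List ℕ, s 0 = S ∧ s m = T ∧ ∀ t < m, G (s t) (s (t + 1))

lemma PlaysG.refl (G : List ℕ → List ℕ → Prop) (S : List ℕ) : PlaysG G S S 0 :=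
  ⟨fun _ => S, rfl, rfl, fun t ht => absurd ht (by omega)⟩

lemma PlaysG.single {G : List ℕ → List ℕ → Prop} {S T : List ℕ} (h : G S T) :
    PlaysG G S T 1 :=
  ⟨fun t => if t = 0 then S else T, by simp, by simp, by
    intro t ht
    have : t = 0 := by omega
    simp [this, h]⟩

lemma PlaysG.trans {G : List ℕ → List ℕ → Prop} {S T U : List ℕ} {a b : ℕ}
    (h1 : PlaysG G S T a) (h2 : PlaysG G T U b) : PlaysG G S U (a + b) := by
  obtain ⟨s1, hs10, hs1a, hm1⟩ := h1
  obtain ⟨s2, hs20, hs2b, hm2⟩ := h2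
  refine ⟨fun t => if t < a then s1 t else s2 (t - a), ?_, ?_, ?_⟩
  · by_cases h : 0 < a
    · simp [h, hs10]
    · have : a = 0 := by omega
      simp [this, hs20, ← hs10, ← hs1a, this]
  · have h : ¬ (a + b < a) := by omega
    simp [h, hs2b]
  · intro t ht
    by_cases h1t : t + 1 < a
    · have h2t : t < a := by omega
      simp only [h2t, h1t, if_true]
      exact hm1 t (by omega)
    · by_cases h2t : t < a
      · have e : t + 1 = a := by omega
        have e2 : s2 (t + 1 - a) = s1 (t + 1) := by
          rw [e, Nat.sub_self, hs20, ← hs1a]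
        simp only [h2t, h1t, if_true, if_false]
        rw [e2]
        exact hm1 t (by omega)
      · simp only [h2t, h1t, if_false]
        have e : t + 1 - a = (t - a) + 1 := by omega
        rw [e]
        exact hm2 (t - a) (by omega)

lemma PlaysG.mono {G G' : List ℕ → List ℕ → Prop} (hGG : ∀ S T, G S T → G' S T)
    {S T : List ℕ} {m : ℕ} (h : PlaysG G S T m) : PlaysG G' S T m := by
  obtain ⟨s, h0, hm, hstep⟩ := h
  exact ⟨s, h0, hm, fun t ht => hGG _ _ (hstep t ht)⟩

lemma PlaysG.fw_le {S T : List ℕ} {m : ℕ} (h : PlaysG Move S T m) : fw T + m ≤ fw S := by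
  obtain ⟨s, h0, hm, hstep⟩ := h
  have key : ∀ t ≤ m, fw (s t) + t ≤ fw (s 0) := by
    intro t ht
    induction t with
    | zero => omega
    | succ k ih =>
      have h1 := (hstep k (by omega)).fw_drop
      have h2 := ih (by omega)
      omega
  have h := key m le_rfl
  rw [h0, hm] at h
  omega

lemma PlaysG.val_eq {S T : List ℕ} {m : ℕ} (h : PlaysG Move S T m) : val S = val T := by
  obtain ⟨s, h0, hm, hstep⟩ := h
  have key : ∀ t ≤ m, val (s 0) = val (s t) := by
    intro t ht
    induction t with
    | zero => rfl
    | succ k ih => exact (ih (by omega)).trans (hstep k (by omega)).val_eq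
  rw [← h0, ← hm]; exact key m le_rfl

lemma PlaysG.pos {S T : List ℕ} {m : ℕ} (h : PlaysG Move S T m)
    (hS : ∀ x ∈ S, 1 ≤ x) : ∀ x ∈ T, 1 ≤ x := by
  obtain ⟨s, h0, hm, hstep⟩ := h
  have key : ∀ t ≤ m, ∀ x ∈ s t, 1 ≤ x := by
    intro t ht
    induction t with
    | zero => rw [h0]; exact hS
    | succ k ih => exact (hstep k (by omega)).pos (ih (by omega))
  rw [← hm]; exact key m le_rfl

/-- any state can be extended to a terminal state -/
lemma extend_terminal (S : List ℕ) : ∃ T m, PlaysG Move S T m ∧ Terminal T := by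
  induction S using (measure fw).wf.induction with
  | _ S ih =>
    by_cases hT : Terminal S
    · exact ⟨S, 0, PlaysG.refl _ _, hT⟩
    · rw [Terminal] at hT
      push_neg at hT
      obtain ⟨T', hmove⟩ := hT
      obtain ⟨T, m, hplay, hterm⟩ := ih T' hmove.fw_drop
      exact ⟨T, 1 + m, (PlaysG.single hmove).trans hplay, hterm⟩

/-- membership in the set defining `M` -/
lemma mem_M_set {n m : ℕ} {T : List ℕ} (h : PlaysG Move (List.replicate n 1) T m)
    (hT : Terminal T) : m ∈ {m | ∃ s : ℕ → List ℕ, IsPlay n s m ∧ Terminal (s m)} := by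
  obtain ⟨s, h0, hm, hstep⟩ := h
  exact ⟨s, ⟨h0, hstep⟩, by rw [hm]; exact hT⟩

lemma M_set_bddAbove (n : ℕ) :
    BddAbove {m | ∃ s : ℕ → List ℕ, IsPlay n s m ∧ Terminal (s m)} := by
  refine ⟨fw (List.replicate n 1), ?_⟩
  rintro m ⟨s, ⟨h0, hstep⟩, -⟩
  have : PlaysG Move (List.replicate n 1) (s m) m := ⟨s, h0, rfl, hstep⟩
  have := this.fw_le
  omega

/-! ### Level potentials for the lower bound -/

/-- total Fibonacci value carried at levels `≥ k` -/
def vk (k : ℕ) (S : List ℕ) : ℕ := ((S.filter (fun x => k ≤ x)).map F).sum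

lemma vk_nil (k : ℕ) : vk k [] = 0 := rfl

lemma vk_append (k : ℕ) (u v : List ℕ) : vk k (u ++ v) = vk k u + vk k v := by
  simp [vk, List.filter_append]

lemma vk_cons (k x : ℕ) (t : List ℕ) :
    vk k (x :: t) = (if k ≤ x then F x else 0) + vk k t := by
  by_cases h : k ≤ x <;> simp [vk, List.filter_cons, h]

lemma vk_single (k x : ℕ) : vk k [x] = if k ≤ x then F x else 0 := by
  rw [vk_cons, vk_nil]; omega

lemma vk_eq_zero {k : ℕ} {S : List ℕ} (h : ∀ x ∈ S, x < k) : vk k S = 0 := by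
  induction S with
  | nil => rfl
  | cons x t ih =>
    rw [vk_cons, if_neg (by have := h x (by simp); omega), ih (fun y hy => h y (by simp [hy]))]

/-- the sum over `k ∈ [4, K]` of `vk k` -/
def A (K : ℕ) (S : List ℕ) : ℕ := ∑ k ∈ Finset.Icc 4 K, vk k S

lemma A_append (K : ℕ) (u v : List ℕ) : A K (u ++ v) = A K u + A K v := by
  simp [A, vk_append, Finset.sum_add_distrib]

lemma A_nil (K : ℕ) : A K [] = 0 := by simp [A, vk_nil]

lemma A_pair (K x y : ℕ) : A K [x, y] = A K [x] + A K [y] := A_append K [x] [y]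

lemma A_single_le (K x : ℕ) : A K [x] ≤ K * F x := by
  calc A K [x] ≤ ∑ k ∈ Finset.Icc 4 K, F x := by
        apply Finset.sum_le_sum
        intro k _
        rw [vk_single]
        split <;> omega
    _ ≤ K * F x := by
        rw [Finset.sum_const, Nat.card_Icc, smul_eq_mul]
        exact Nat.mul_le_mul_right _ (by omega)

lemma F_succ_le_two_mul {i : ℕ} (hi : 1 ≤ i) : F (i + 1) ≤ 2 * F i := by
  obtain ⟨k, rfl⟩ : ∃ k, i = k + 1 := ⟨i - 1, by omega⟩
  have h1 : F (k + 2) = F (k + 1) + F k := F_add_two k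
  have h2 : F k ≤ F (k + 1) := F_mono (by omega)
  have h3 : F (k + 1 + 1) = F (k + 2) := rfl
  omega

/-- master inequality: each move raises the aggregate level potential by at most
`12 ·` (its monovariant drop minus one). -/
lemma Move.master {S T : List ℕ} (h : Move S T) (K : ℕ) :
    A K T + 12 * (fw T + 1) ≤ A K S + 12 * fw S := by
  have hd := h.fw_drop
  induction h with
  | merge a b i hi =>
    -- A-change bounded by F i + F (i+2) if i ≥ 2, and 0 if i = 1; fw drop is val a + F i
    have hA : A K (a ++ [i+2] ++ b) ≤ A K (a ++ [i, i+1] ++ b) + (if 2 ≤ i then F i + F (i+2) else 0) := by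
      rw [A_append, A_append, A_append, A_append, A_pair]
      have key : A K [i+2] ≤ A K [i] + A K [i+1] + (if 2 ≤ i then F i + F (i+2) else 0) := by
        by_cases h2 : 2 ≤ i
        · rw [if_pos h2]
          unfold A
          rw [← Finset.sum_add_distrib]
          have step : ∀ k ∈ Finset.Icc 4 K, vk k [i+2] ≤
              (vk k [i] + vk k [i+1]) + ((if k = i+1 then F i else 0) + (if k = i+2 then F (i+2) else 0)) := by
            intro k hk
            simp only [vk_single]
            rcases Nat.lt_or_ge i k with hik | hik
            · -- k ≥ i+1
              rcases Nat.lt_or_ge (i+1) k with hik1 | hik1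
              · rcases Nat.lt_or_ge (i+2) k with hik2 | hik2
                · rw [if_neg (by omega), if_neg (by omega), if_neg (by omega),
                    if_neg (by omega), if_neg (by omega)]
                · have : k = i + 2 := by omega
                  rw [if_pos (by omega), if_neg (by omega), if_neg (by omega),
                    if_neg (by omega), if_pos this]
                  omega
              · have : k = i + 1 := by omega
                rw [if_pos (by omega), if_neg (by omega), if_pos (by omega),
                  if_pos this, if_neg (by omega)]
                rw [F_add_two]
                omega
            · rw [if_pos (by omega), if_pos (by omega), if_pos (by omega),
                if_neg (by omega), if_neg (by omega)]
              rw [F_add_two]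
              omega
          calc ∑ k ∈ Finset.Icc 4 K, vk k [i+2]
              ≤ ∑ k ∈ Finset.Icc 4 K, ((vk k [i] + vk k [i+1]) +
                ((if k = i+1 then F i else 0) + (if k = i+2 then F (i+2) else 0))) :=
                Finset.sum_le_sum step
            _ ≤ (∑ k ∈ Finset.Icc 4 K, (vk k [i] + vk k [i+1])) + (F i + F (i+2)) := by
                have e1 : ∑ k ∈ Finset.Icc 4 K,
                    ((if k = i+1 then F i else 0) + (if k = i+2 then F (i+2) else 0)) ≤ F i + F (i+2) := by
                  rw [Finset.sum_add_distrib, Finset.sum_ite_eq', Finset.sum_ite_eq']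
                  split <;> split <;> omega
                rw [Finset.sum_add_distrib]
                omega
            _ = _ := by rw [Finset.sum_add_distrib]
        · -- i = 1 : all levels involved are < 4
          have hi1 : i = 1 := by omega
          subst hi1
          rw [if_neg h2]
          have z1 : A K [1+2] = 0 := by
            unfold A
            apply Finset.sum_eq_zero
            intro k hk
            simp only [Finset.mem_Icc] at hk
            exact vk_eq_zero (by intro x hx; simp at hx; omega)
          omega
      omega
    have hfw : fw (a ++ [i, i+1] ++ b) = fw (a ++ [i+2] ++ b) + (val a + F i) := by
      rw [fw_mid, fw_mid, fw_pair, fw_single, val_pair, val_single, F_add_two]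
      simp only [List.length_cons, List.length_nil]
      ring
    by_cases h2 : 2 ≤ i
    · rw [if_pos h2] at hA
      have hF2 : F i + F (i+2) ≤ 4 * F i := by
        have e1 : F (i+2) = F (i+1) + F i := F_add_two i
        have e2 : F (i+1) ≤ 2 * F i := F_succ_le_two_mul (by omega)
        omega
      have hFi : 2 ≤ F i := by
        calc 2 = F 2 := rfl
        _ ≤ F i := F_mono h2
      omega
    · rw [if_neg h2] at hA
      omega
  | mergeOnes a b =>
    have hA : A K (a ++ [2] ++ b) ≤ A K (a ++ [1, 1] ++ b) := by
      rw [A_append, A_append, A_append, A_append]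
      have z1 : A K [2] = 0 := by
        unfold A
        apply Finset.sum_eq_zero
        intro k hk
        simp only [Finset.mem_Icc] at hk
        exact vk_eq_zero (by intro x hx; simp at hx; omega)
      omega
    omega
  | split a b i hi =>
    obtain ⟨k0, rfl⟩ : ∃ k0, i = k0 + 3 := ⟨i - 3, by omega⟩
    have h1 : k0 + 3 - 2 = k0 + 1 := by omega
    have e0 : k0 + 3 + 1 = k0 + 4 := rfl
    rw [h1] at hd ⊢
    rw [e0] at hd ⊢
    have hA : A K (a ++ [k0+1, k0+4] ++ b) ≤ A K (a ++ [k0+3, k0+3] ++ b) + F (k0 + 4) := by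
      rw [A_append, A_append, A_append, A_append, A_pair, A_pair]
      have key : A K [k0+1] + A K [k0+4] ≤ A K [k0+3] + A K [k0+3] + F (k0+4) := by
        unfold A
        rw [← Finset.sum_add_distrib, ← Finset.sum_add_distrib]
        have step : ∀ k ∈ Finset.Icc 4 K, vk k [k0+1] + vk k [k0+4] ≤
            (vk k [k0+3] + vk k [k0+3]) + (if k = k0+4 then F (k0+4) else 0) := by
          intro k hk
          simp only [vk_single]
          have e3 : F (k0+3) = F (k0+2) + F (k0+1) := F_add_two (k0+1)
          have e4 : F (k0+4) = F (k0+3) + F (k0+2) := F_add_two (k0+2)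
          have e5 : F (k0+2) ≤ F (k0+3) := F_mono (by omega)
          rcases Nat.lt_or_ge (k0+1) k with hik | hik
          · rcases Nat.lt_or_ge (k0+3) k with hik3 | hik3
            · rcases Nat.lt_or_ge (k0+4) k with hik4 | hik4
              · rw [if_neg (by omega), if_neg (by omega), if_neg (by omega), if_neg (by omega)]
              · have he : k = k0+4 := by omega
                rw [if_neg (by omega), if_pos (by omega), if_neg (by omega), if_pos he]
            · rw [if_neg (by omega), if_pos (by omega), if_pos (by omega), if_neg (by omega)]
              omega
          · rw [if_pos (by omega), if_pos (by omega), if_pos (by omega), if_neg (by omega)]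
            omega
        calc ∑ k ∈ Finset.Icc 4 K, (vk k [k0+1] + vk k [k0+4])
            ≤ ∑ k ∈ Finset.Icc 4 K, ((vk k [k0+3] + vk k [k0+3]) + (if k = k0+4 then F (k0+4) else 0)) :=
              Finset.sum_le_sum step
          _ ≤ _ := by
              have e2 : ∑ k ∈ Finset.Icc 4 K, (if k = k0+4 then F (k0+4) else 0) ≤ F (k0+4) := by
                rw [Finset.sum_ite_eq']
                split <;> omega
              rw [Finset.sum_add_distrib]
              omega
      omega
    have hfw : fw (a ++ [k0+3, k0+3] ++ b) = fw (a ++ [k0+1, k0+4] ++ b) + F (k0 + 2) := by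
      rw [fw_mid, fw_mid, fw_pair, fw_pair, val_pair, val_pair]
      have e3 : F (k0+3) = F (k0+2) + F (k0+1) := F_add_two (k0+1)
      have e4 : F (k0+4) = F (k0+3) + F (k0+2) := F_add_two (k0+2)
      simp only [List.length_cons, List.length_nil]
      have ev : F (k0+1) + F (k0+4) = F (k0+3) + F (k0+3) := by omega
      rw [show F (k0+1) + F (k0+4) = F (k0+3) + F (k0+3) from ev]
      omega
    have hF : F (k0+4) ≤ 4 * F (k0+2) := by
      have e3 : F (k0+3) = F (k0+2) + F (k0+1) := F_add_two (k0+1)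
      have e4 : F (k0+4) = F (k0+3) + F (k0+2) := F_add_two (k0+2)
      have := F_mono (show k0+1 ≤ k0+2 by omega)
      omega
    have hF2 : 2 ≤ F (k0+2) := by
      calc 2 = F 2 := rfl
      _ ≤ F (k0+2) := F_mono (by omega)
    omega
  | splitTwos a b =>
    have hA : A K (a ++ [1, 3] ++ b) ≤ A K (a ++ [2, 2] ++ b) := by
      rw [A_append, A_append, A_append, A_append]
      have z1 : A K [1, 3] = 0 := by
        unfold A
        apply Finset.sum_eq_zero
        intro k hk
        simp only [Finset.mem_Icc] at hk
        exact vk_eq_zero (by intro x hx; simp at hx; omega)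
      omega
    omega
  | switch a b i j hj hij =>
    have hA : A K (a ++ [j, i] ++ b) = A K (a ++ [i, j] ++ b) := by
      rw [A_append, A_append, A_append, A_append]
      have : A K [j, i] = A K [i, j] := by
        unfold A
        apply Finset.sum_congr rfl
        intro k _
        rw [vk_cons, vk_cons, vk_cons, vk_cons, vk_nil]
        omega
      omega
    omega

/-! ### Structure of terminal states -/

lemma terminal_tail {x : ℕ} {t : List ℕ} (h : Terminal (x :: t)) : Terminal t := by
  intro T hT
  exact h (x :: T) (by have := hT.embed [x] []; simpa using this)

lemma terminal_head_pair {x y : ℕ} {t : List ℕ} (h : Terminal (x :: y :: t))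
    (hx : 1 ≤ x) (hy : 1 ≤ y) : x + 2 ≤ y := by
  by_contra hcon
  push_neg at hcon
  rcases Nat.lt_or_ge y x with hlt | hge
  · exact h _ (by have := Move.switch [] t x y hy hlt; simpa using this)
  · rcases Nat.lt_or_ge x y with hlt2 | hge2
    · have : y = x + 1 := by omega
      subst this
      exact h _ (by have := Move.merge [] t x hx; simpa using this)
    · have : y = x := by omega
      subst this
      rcases Nat.lt_or_ge 2 y with h2 | h2
      · exact h _ (by have := Move.split [] t y h2; simpa using this)
      · rcases Nat.lt_or_ge y 2 with h1 | h1
        · have : y = 1 := by omega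
          subst this
          exact h _ (by have := Move.mergeOnes [] t; simpa using this)
        · have : y = 2 := by omega
          subst this
          exact h _ (by have := Move.splitTwos [] t; simpa using this)

lemma terminal_chain {S : List ℕ} (h : Terminal S) (hpos : ∀ x ∈ S, 1 ≤ x) :
    List.Chain' (fun x y => x + 2 ≤ y) S := by
  induction S with
  | nil => exact List.isChain_nil
  | cons x t ih =>
    match t, ih with
    | [], _ => exact List.isChain_singleton _
    | y :: t', ih =>
      unfold List.Chain'
      rw [List.isChain_cons_cons]
      refine ⟨terminal_head_pair h (hpos x (by simp)) (hpos y (by simp)), ?_⟩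
      exact ih (terminal_tail h) (fun z hz => hpos z (by simp [hz]))

instance : IsTrans ℕ (fun x y => x + 2 ≤ y) := ⟨fun _ _ _ h1 h2 => by omega⟩

lemma terminal_pairwise {S : List ℕ} (h : Terminal S) (hpos : ∀ x ∈ S, 1 ≤ x) :
    List.Pairwise (fun x y => x + 2 ≤ y) S :=
  List.isChain_iff_pairwise.1 (terminal_chain h hpos)

/-- Zeckendorf-type states have tiny value below any level: `val S < F k + vk k S`. -/
lemma zeck_val_lt {S : List ℕ} (hp : List.Pairwise (fun x y => x + 2 ≤ y) S)
    (hpos : ∀ x ∈ S, 1 ≤ x) : ∀ k, val S + 1 ≤ F k + vk k S := by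
  induction S using List.reverseRecOn with
  | nil => intro k; simp [val, vk_nil, F_pos k]
  | append_singleton init y ih =>
    intro k
    have hpi : List.Pairwise (fun x y => x + 2 ≤ y) init := (List.pairwise_append.1 hp).1
    have hyb : ∀ x ∈ init, x + 2 ≤ y := by
      intro x hx
      exact (List.pairwise_append.1 hp).2.2 x hx y (by simp)
    have hposi : ∀ x ∈ init, 1 ≤ x := fun x hx => hpos x (by simp [hx])
    have hy1 : 1 ≤ y := hpos y (by simp)
    rw [val_append, vk_append, val_single, vk_single]
    rcases Nat.lt_or_ge y k with hyk | hyk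
    · -- low last element: init is entirely below y - 1
      rw [if_neg (by omega), vk_eq_zero (fun x hx => by have := hyb x hx; omega)]
      have h1 := ih hpi hposi (y - 1)
      rw [vk_eq_zero (fun x hx => by have := hyb x hx; omega)] at h1
      have h2 : F (y - 1) + F y = F (y + 1) := by
        obtain ⟨z, rfl⟩ : ∃ z, y = z + 1 := ⟨y - 1, by omega⟩
        have e1 : z + 1 - 1 = z := by omega
        rw [e1]
        have e2 := F_add_two z
        have e3 : F (z + 1 + 1) = F (z + 2) := rfl
        omega
      have h3 : F (y + 1) ≤ F k := F_mono (by omega)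
      omega
    · rw [if_pos hyk]
      have h1 := ih hpi hposi k
      omega

/-- in particular `vk k` of a terminal state is nearly the whole value -/
lemma terminal_vk {S : List ℕ} (h : Terminal S) (hpos : ∀ x ∈ S, 1 ≤ x) (k : ℕ) :
    val S + 1 ≤ F k + vk k S :=
  zeck_val_lt (terminal_pairwise h hpos) hpos k

/-- a strictly increasing list of naturals in `[2, B]` has length at most `B - 1` -/
lemma length_le_of_strict {t : List ℕ} (h : List.Pairwise (· < ·) t)
    (hlo : ∀ x ∈ t, 2 ≤ x) (hhi : ∀ x ∈ t, x ≤ B) : t.length ≤ B - 1 := by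
  have hnd : t.Nodup := h.nodup
  have hsub : t.toFinset ⊆ Finset.Icc 2 B := by
    intro x hx
    rw [List.mem_toFinset] at hx
    rw [Finset.mem_Icc]
    exact ⟨hlo x hx, hhi x hx⟩
  have := Finset.card_le_card hsub
  rw [List.toFinset_card_of_nodup hnd, Nat.card_Icc] at this
  omega

/-! ### The quantitative lower bound (natural-number form) -/

lemma A_replicate_one (K n : ℕ) : A K (List.replicate n 1) = 0 := by
  unfold A
  apply Finset.sum_eq_zero
  intro k hk
  simp only [Finset.mem_Icc] at hk
  apply vk_eq_zero
  intro x hx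
  rw [List.eq_of_mem_replicate hx]
  omega

lemma master_telescope {S T : List ℕ} {m : ℕ} (K : ℕ) (h : PlaysG Move S T m) :
    A K T + 12 * fw T + 12 * m ≤ A K S + 12 * fw S := by
  obtain ⟨s, h0, hm, hstep⟩ := h
  have key : ∀ t ≤ m, A K (s t) + 12 * fw (s t) + 12 * t ≤ A K (s 0) + 12 * fw (s 0) := by
    intro t ht
    induction t with
    | zero => omega
    | succ k ih =>
      have h1 := (hstep k (by omega)).master K
      have h2 := ih (by omega)
      omega
  have h := key m le_rfl
  rw [h0, hm] at h
  omega

/-- main lower-bound estimate in ℕ : any completed play on `n` with `m` moves satisfies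
`24 m + (K-3) n + 24 n ≤ 12 n (n+1)` whenever `4 ≤ K` and `2 F K ≤ n`. -/
lemma lower_nat {n m K : ℕ} (hK : 4 ≤ K) (hFK : 2 * F K ≤ n)
    (hm : m ∈ {m | ∃ s : ℕ → List ℕ, IsPlay n s m ∧ Terminal (s m)}) :
    24 * m + (K - 3) * n + 24 * n ≤ 12 * (n * (n + 1)) := by
  obtain ⟨s, ⟨h0, hstep⟩, hterm⟩ := hm
  have hplay : PlaysG Move (List.replicate n 1) (s m) m := ⟨s, h0, rfl, hstep⟩
  set T := s m with hT
  have hval : val T = n := by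
    have := hplay.val_eq
    rw [val_replicate_one] at this
    omega
  have hpos : ∀ x ∈ T, 1 ≤ x := hplay.pos (by intro x hx; rw [List.eq_of_mem_replicate hx])
  have htel := master_telescope K hplay
  rw [A_replicate_one] at htel
  have hfw0 : 2 * fw (List.replicate n 1) = n * (n + 1) := fw_replicate_one n
  have hfwT : n ≤ fw T := hval ▸ val_le_fw T
  -- bound A K T from below
  have hAT : (K - 3) * n ≤ 2 * A K T := by
    have hptw : ∀ k ∈ Finset.Icc 4 K, n ≤ 2 * vk k T := by
      intro k hk
      simp only [Finset.mem_Icc] at hk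
      have h1 := terminal_vk hterm hpos k
      rw [hval] at h1
      have h2 : 2 * F k ≤ n := by
        have := F_mono hk.2
        omega
      omega
    calc (K - 3) * n = ∑ _k ∈ Finset.Icc 4 K, n := by
          rw [Finset.sum_const, Nat.card_Icc, smul_eq_mul,
            show K + 1 - 4 = K - 3 from by omega]
      _ ≤ ∑ k ∈ Finset.Icc 4 K, 2 * vk k T := Finset.sum_le_sum hptw
      _ = 2 * A K T := by rw [A, Finset.mul_sum]
  omega

/-! ### Upper bound: cheap plays guided by a potential -/

/-- potential paying for the expensive moves of the constructed play -/
def Psi (K : ℕ) (S : List ℕ) : ℕ := 2 * ((S.map (fun x => (K - x) * F x)).sum)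

lemma Psi_append (K : ℕ) (u v : List ℕ) : Psi K (u ++ v) = Psi K u + Psi K v := by
  simp [Psi]; ring

lemma Psi_replicate_one (K n : ℕ) : Psi K (List.replicate n 1) = 2 * n * (K - 1) := by
  induction n with
  | zero => simp [Psi]
  | succ k ih =>
    rw [List.replicate_succ]
    show Psi K ([1] ++ List.replicate k 1) = _
    rw [Psi_append, ih]
    simp [Psi, F_one]
    ring

/-- a good move: a move whose monovariant drop exceeds `1` by at most the
potential decrease -/
def Good (K : ℕ) (S T : List ℕ) : Prop :=
  Move S T ∧ fw S + Psi K T ≤ fw T + Psi K S + 1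

/-- a good move preserving length (these may be embedded in any context) -/
def GoodL (K : ℕ) (S T : List ℕ) : Prop := Good K S T ∧ S.length = T.length

lemma Psi_pair (K x y : ℕ) : Psi K [x, y] = 2 * ((K - x) * F x) + 2 * ((K - y) * F y) := by
  simp [Psi]; ring

lemma Psi_single (K x : ℕ) : Psi K [x] = 2 * ((K - x) * F x) := by simp [Psi]

lemma good_m1_front (K : ℕ) (b : List ℕ) : Good K ([1, 1] ++ b) ([2] ++ b) := by
  constructor
  · have := Move.mergeOnes [] b; simpa using this
  · have hfw : fw ([1,1] ++ b) = fw ([2] ++ b) + 1 := by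
      rw [fw_append, fw_append, fw_pair, fw_single, val_pair, val_single, F_one, F_two]
      omega
    have hPsi : Psi K ([2] ++ b) ≤ Psi K ([1,1] ++ b) := by
      rw [Psi_append, Psi_append, Psi_pair, Psi_single, F_one, F_two]
      have : (K - 2) * 2 ≤ (K - 1) * 1 + (K - 1) * 1 := by omega
      omega
    omega

lemma good_merge12_front (K : ℕ) (hK : 3 ≤ K) (b : List ℕ) :
    Good K ([1, 2] ++ b) ([3] ++ b) := by
  constructor
  · have := Move.merge [] b 1 le_rfl; simpa using this
  · have hfw : fw ([1,2] ++ b) = fw ([3] ++ b) + 1 := by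
      rw [fw_append, fw_append, fw_pair, fw_single, val_pair, val_single, F_one, F_two, F_three]
      omega
    have hPsi : Psi K ([3] ++ b) ≤ Psi K ([1,2] ++ b) := by
      rw [Psi_append, Psi_append, Psi_pair, Psi_single, F_one, F_two, F_three]
      have : (K - 3) * 3 ≤ (K - 1) * 1 + (K - 2) * 2 := by omega
      omega
    omega

lemma goodL_sw21 (K : ℕ) (a b : List ℕ) :
    GoodL K (a ++ [2, 1] ++ b) (a ++ [1, 2] ++ b) := by
  refine ⟨⟨Move.switch a b 2 1 le_rfl (by omega), ?_⟩, by simp⟩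
  have hfw : fw (a ++ [2,1] ++ b) = fw (a ++ [1,2] ++ b) + 1 := by
    rw [fw_mid, fw_mid, fw_pair, fw_pair, val_pair, val_pair, F_one, F_two]
    simp only [List.length_cons, List.length_nil]
    omega
  have hPsi : Psi K (a ++ [1,2] ++ b) = Psi K (a ++ [2,1] ++ b) := by
    rw [List.append_assoc, List.append_assoc, Psi_append, Psi_append,
      Psi_append, Psi_append, Psi_pair, Psi_pair]
    omega
  omega

lemma goodL_sw32 (K : ℕ) (a b : List ℕ) :
    GoodL K (a ++ [3, 2] ++ b) (a ++ [2, 3] ++ b) := by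
  refine ⟨⟨Move.switch a b 3 2 (by omega) (by omega), ?_⟩, by simp⟩
  have hfw : fw (a ++ [3,2] ++ b) = fw (a ++ [2,3] ++ b) + 1 := by
    rw [fw_mid, fw_mid, fw_pair, fw_pair, val_pair, val_pair, F_two, F_three]
    simp only [List.length_cons, List.length_nil]
    omega
  have hPsi : Psi K (a ++ [2,3] ++ b) = Psi K (a ++ [3,2] ++ b) := by
    rw [List.append_assoc, List.append_assoc, Psi_append, Psi_append,
      Psi_append, Psi_append, Psi_pair, Psi_pair]
    omega
  omega

lemma goodL_s2 (K : ℕ) (hK : 3 ≤ K) (a b : List ℕ) :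
    GoodL K (a ++ [2, 2] ++ b) (a ++ [1, 3] ++ b) := by
  refine ⟨⟨Move.splitTwos a b, ?_⟩, by simp⟩
  have hfw : fw (a ++ [2,2] ++ b) = fw (a ++ [1,3] ++ b) + 1 := by
    rw [fw_mid, fw_mid, fw_pair, fw_pair, val_pair, val_pair, F_one, F_two, F_three]
    simp only [List.length_cons, List.length_nil]
    omega
  have hPsi : Psi K (a ++ [1,3] ++ b) ≤ Psi K (a ++ [2,2] ++ b) := by
    rw [List.append_assoc, List.append_assoc, Psi_append, Psi_append,
      Psi_append, Psi_append, Psi_pair, Psi_pair, F_one, F_two, F_three]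
    have : (K - 1) * 1 + (K - 3) * 3 ≤ (K - 2) * 2 + (K - 2) * 2 := by omega
    omega
  omega

lemma goodL_split (K w : ℕ) (hK : w + 4 ≤ K) (a b : List ℕ) :
    GoodL K (a ++ [w + 3, w + 3] ++ b) (a ++ [w + 1, w + 4] ++ b) := by
  have hmv : Move (a ++ [w + 3, w + 3] ++ b) (a ++ [w + 1, w + 4] ++ b) := by
    have h := Move.split a b (w + 3) (by omega)
    have e : w + 3 - 2 = w + 1 := by omega
    rw [e] at h
    exact h
  refine ⟨⟨hmv, ?_⟩, by simp⟩
  have eA : F (w + 2) = F (w + 1) + F w := F_add_two w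
  have eB : F (w + 3) = F (w + 2) + F (w + 1) := F_add_two (w + 1)
  have eC : F (w + 4) = F (w + 3) + F (w + 2) := F_add_two (w + 2)
  have hmono : F w ≤ F (w + 1) := F_mono (by omega)
  have hfw : fw (a ++ [w+3, w+3] ++ b) = fw (a ++ [w+1, w+4] ++ b) + F (w + 2) := by
    rw [fw_mid, fw_mid, fw_pair, fw_pair, val_pair, val_pair]
    have ev : F (w+1) + F (w+4) = F (w+3) + F (w+3) := by omega
    rw [show F (w+1) + F (w+4) = F (w+3) + F (w+3) from ev]
    simp only [List.length_cons, List.length_nil]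
    omega
  have hPsi : Psi K (a ++ [w+1, w+4] ++ b) + 2 * F (w + 2) ≤ Psi K (a ++ [w+3, w+3] ++ b) := by
    rw [List.append_assoc, List.append_assoc, Psi_append, Psi_append,
      Psi_append, Psi_append, Psi_pair, Psi_pair]
    -- (K-(w+1)) F(w+1) + (K-(w+4)) F(w+4) + F(w+2) ≤ 2 (K-(w+3)) F(w+3)
    have key : (K - (w+1)) * F (w+1) + (K - (w+4)) * F (w+4) + F (w + 2) ≤
        (K - (w+3)) * F (w+3) + (K - (w+3)) * F (w+3) := by
      obtain ⟨u, hu⟩ : ∃ u, K = w + 4 + u := ⟨K - (w+4), by omega⟩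
      subst hu
      have e1 : w + 4 + u - (w+1) = u + 3 := by omega
      have e2 : w + 4 + u - (w+4) = u := by omega
      have e3 : w + 4 + u - (w+3) = u + 1 := by omega
      rw [e1, e2, e3]
      nlinarith [F_pos w, F_pos (w+1)]
    omega
  have hF : F (w + 2) ≤ 2 * F (w + 2) + 1 := by omega
  omega

/-! ### Embedding good length-preserving plays in contexts -/

lemma GoodL.embed {K : ℕ} {S T : List ℕ} (h : GoodL K S T) (u v : List ℕ) :
    GoodL K (u ++ S ++ v) (u ++ T ++ v) := by
  obtain ⟨⟨hmv, hineq⟩, hlen⟩ := h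
  refine ⟨⟨hmv.embed u v, ?_⟩, by simp [hlen]⟩
  have hval : val S = val T := hmv.val_eq
  rw [fw_mid, fw_mid, Psi_append, Psi_append, Psi_append, Psi_append, hlen, hval]
  omega

lemma PlaysG.embedL {K : ℕ} {S T : List ℕ} {m : ℕ} (h : PlaysG (GoodL K) S T m)
    (u v : List ℕ) : PlaysG (GoodL K) (u ++ S ++ v) (u ++ T ++ v) m := by
  obtain ⟨s, h0, hm, hstep⟩ := h
  exact ⟨fun t => u ++ s t ++ v, by simp only []; rw [h0], by simp only []; rw [hm],
    fun t ht => (hstep t ht).embed u v⟩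

lemma GoodL.toGood {K : ℕ} {S T : List ℕ} (h : GoodL K S T) : Good K S T := h.1

/-- count estimate for good plays -/
lemma PlaysG.good_count {K : ℕ} {S T : List ℕ} {m : ℕ} (h : PlaysG (Good K) S T m) :
    fw S ≤ fw T + Psi K S + m := by
  obtain ⟨s, h0, hm, hstep⟩ := h
  have key : ∀ t ≤ m, fw (s 0) + Psi K (s t) ≤ fw (s t) + Psi K (s 0) + t := by
    intro t ht
    induction t with
    | zero => omega
    | succ k ih =>
      have h1 := (hstep k (by omega)).2
      have h2 := ih (by omega)
      omega
  have h := key m le_rfl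
  rw [h0, hm] at h
  omega

lemma PlaysG.good_toMove {K : ℕ} {S T : List ℕ} {m : ℕ} (h : PlaysG (Good K) S T m) :
    PlaysG Move S T m := h.mono (fun _ _ hg => hg.1)

/-- transporting a `2` to the right across a block of `1`s, by good switches -/
lemma transport2 (K : ℕ) (q : ℕ) (b : List ℕ) :
    PlaysG (GoodL K) ([2] ++ List.replicate q 1 ++ b) (List.replicate q 1 ++ [2] ++ b) q := by
  induction q generalizing b with
  | zero => simpa using PlaysG.refl (GoodL K) (2 :: b)
  | succ p ih =>
    have step : GoodL K ([2] ++ List.replicate (p+1) 1 ++ b) ([1] ++ ([2] ++ List.replicate p 1 ++ b)) := by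
      have h := goodL_sw21 K [] (List.replicate p 1 ++ b)
      have e1 : [2] ++ List.replicate (p+1) 1 ++ b = [] ++ [2, 1] ++ (List.replicate p 1 ++ b) := by
        simp [List.replicate_succ]
      have e2 : [1] ++ ([2] ++ List.replicate p 1 ++ b) = [] ++ [1, 2] ++ (List.replicate p 1 ++ b) := by
        simp
      rw [e1, e2]
      exact h
    have rest : PlaysG (GoodL K) ([1] ++ ([2] ++ List.replicate p 1 ++ b))
        ([1] ++ (List.replicate p 1 ++ [2] ++ b)) p := by
      have h := (ih b).embedL [1] []
      simpa using h
    have comp := (PlaysG.single step).trans rest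
    have e3 : [1] ++ (List.replicate p 1 ++ [2] ++ b) = List.replicate (p+1) 1 ++ [2] ++ b := by
      simp [List.replicate_succ]
    rw [e3] at comp
    have e4 : (1 : ℕ) + p = p + 1 := by omega
    rw [e4] at comp
    exact comp

/-! ### The carry cascade -/

lemma chain'_lt_of_cons {y : ℕ} {t : List ℕ} (h : List.Chain' (· < ·) (y :: t)) :
    ∀ z ∈ t, y < z := by
  have hp := List.isChain_iff_pairwise.1 h
  exact (List.pairwise_cons.1 hp).1

lemma chain'_lt_cons {y : ℕ} {t : List ℕ} (ht : List.Chain' (· < ·) t)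
    (h : ∀ z ∈ t, y < z) : List.Chain' (· < ·) (y :: t) := by
  unfold List.Chain' at ht ⊢
  rw [List.isChain_iff_pairwise] at ht ⊢
  exact List.pairwise_cons.2 ⟨h, ht⟩

lemma cascade (K : ℕ) (hK : 3 ≤ K) :
    ∀ t : List ℕ, ∀ x, 2 ≤ x → List.Chain' (· < ·) t → (∀ y ∈ t, x ≤ y) →
    F x + val t < 2 * F K →
    ∃ e t' m, PlaysG (GoodL K) (x :: t) (List.replicate e 1 ++ t') m ∧
      List.Chain' (· < ·) t' ∧ (∀ y ∈ t', 2 ≤ y) ∧ (∀ y ∈ t', x - 2 ≤ y) ∧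
      (4 ≤ x → e = 0) := by
  intro t
  induction t with
  | nil =>
    intro x hx _ _ _
    exact ⟨0, [x], 0, by simpa using PlaysG.refl _ [x],
      by exact List.isChain_singleton _, by simpa using hx, by simp, fun _ => rfl⟩
  | cons y t₂ ih =>
    intro x hx hchain hge hval
    have hxy : x ≤ y := hge y (by simp)
    have ht₂chain : List.Chain' (· < ·) t₂ := hchain.tail
    have ht₂gt : ∀ z ∈ t₂, y < z := chain'_lt_of_cons hchain
    rcases Nat.lt_or_ge x y with hlt | hge2
    · -- x < y : already sorted
      refine ⟨0, x :: y :: t₂, 0, by simpa using PlaysG.refl _ _, ?_, ?_, ?_, fun _ => rfl⟩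
      · apply chain'_lt_cons hchain
        intro z hz
        rcases List.mem_cons.1 hz with h | h
        · omega
        · exact lt_trans hlt (ht₂gt z h)
      · intro z hz
        rcases List.mem_cons.1 hz with h | h
        · omega
        · rcases List.mem_cons.1 h with h2 | h2
          · omega
          · have := ht₂gt z h2; omega
      · intro z hz
        rcases List.mem_cons.1 hz with h | h
        · omega
        · rcases List.mem_cons.1 h with h2 | h2
          · omega
          · have := ht₂gt z h2; omega
    · -- x = y
      obtain rfl : x = y := by omega
      rcases Nat.lt_or_ge x 3 with hx2 | hx3
      · -- x = 2 : splitTwos, then cascade 3 into t₂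
        have hx2' : x = 2 := by omega
        subst hx2'
        have step : GoodL K (2 :: 2 :: t₂) ([1, 3] ++ t₂) := by
          have h := goodL_s2 K hK [] t₂
          simpa using h
        have hrec := ih 3 (by omega) ht₂chain (fun z hz => by have := ht₂gt z hz; omega)
          (by
            have e1 : F 3 = 3 := rfl
            have e2 : F 2 = 2 := rfl
            rw [val_cons] at hval
            omega)
        obtain ⟨e', t'', m', hplay, hchain'', hge2'', hgex'', he'⟩ := hrec
        have hemb := hplay.embedL [1] []
        simp only [List.append_nil] at hemb
        have comp := (PlaysG.single step).trans hemb
        refine ⟨e' + 1, t'', 1 + m', ?_, hchain'', hge2'', by intro z hz; omega, by omega⟩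
        have e3 : [1] ++ (List.replicate e' 1 ++ t'') = List.replicate (e' + 1) 1 ++ t'' := by
          rw [show e' + 1 = 1 + e' by omega, List.replicate_add]
          simp
        rw [← e3]
        exact comp
      · -- x ≥ 3 : split, then cascade x+1 into t₂
        obtain ⟨w, rfl⟩ : ∃ w, x = w + 3 := ⟨x - 3, by omega⟩
        have hxK : w + 4 ≤ K := by
          have h1 : F (w + 3) + F (w + 3) ≤ F (w + 3) + val ((w + 3) :: t₂) := by
            rw [val_cons]; omega
          have h2 : F (w + 3) < F K := by omega
          by_contra hcon
          have : F K ≤ F (w + 3) := F_mono (by omega)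
          omega
        have step : GoodL K ((w+3) :: (w+3) :: t₂) ([w+1, w+4] ++ t₂) := by
          have h := goodL_split K w hxK [] t₂
          simpa using h
        have hrec := ih (w + 4) (by omega) ht₂chain
          (fun z hz => by have := ht₂gt z hz; omega)
          (by
            have e1 : F (w + 4) = F (w + 3) + F (w + 2) := F_add_two (w + 2)
            have e2 : F (w + 2) ≤ F (w + 3) := F_mono (by omega)
            rw [val_cons] at hval
            omega)
        obtain ⟨e', t'', m', hplay, hchain'', hge2'', hgex'', he'⟩ := hrec
        have he0 : e' = 0 := he' (by omega)
        subst he0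
        simp only [List.replicate_zero, List.nil_append] at hplay
        have hemb := hplay.embedL [w + 1] []
        simp only [List.append_nil] at hemb
        have comp := (PlaysG.single step).trans hemb
        have hw4 : ∀ z ∈ t'', w + 2 ≤ z := by
          intro z hz
          have := hgex'' z hz
          omega
        by_cases hw : w = 0
        · subst hw
          refine ⟨1, t'', 1 + m', ?_, hchain'', hge2'', by intro z hz; have := hw4 z hz; omega,
            by omega⟩
          simpa using comp
        · refine ⟨0, (w + 1) :: t'', 1 + m', ?_, ?_, ?_, ?_, fun _ => rfl⟩
          · simpa using comp
          · exact chain'_lt_cons hchain'' (fun z hz => by have := hw4 z hz; omega)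
          · intro z hz
            rcases List.mem_cons.1 hz with h | h
            · omega
            · exact hge2'' z h
          · intro z hz
            rcases List.mem_cons.1 hz with h | h
            · omega
            · have := hw4 z h; omega

/-! ### The main constructed play -/

lemma F_mem_le_val {y : ℕ} {t : List ℕ} (h : y ∈ t) : F y ≤ val t := by
  induction t with
  | nil => simp at h
  | cons z t ih =>
    rw [val_cons]
    rcases List.mem_cons.1 h with h1 | h1
    · subst h1; omega
    · have := ih h1; omega

lemma fw_eq_zero {S : List ℕ} (h : fw S = 0) : S = [] := by
  cases S with
  | nil => rfl
  | cons x t =>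
    exfalso
    have := F_pos x
    simp only [fw] at h
    nlinarith

lemma stop_bound {K n a : ℕ} {t : List ℕ} (ha : a ≤ 1)
    (hchain : List.Chain' (· < ·) t) (hge : ∀ y ∈ t, 2 ≤ y)
    (hval : val (List.replicate a 1 ++ t) = n) (hn : n + 2 < 2 * F K) :
    fw (List.replicate a 1 ++ t) ≤ (K + 1) * n := by
  have hvt : val t ≤ n := by
    rw [val_append] at hval
    omega
  have hFK2 : 2 * F K ≤ F (K + 2) := by
    have h1 : F (K + 2) = F (K + 1) + F K := F_add_two K
    have h2 : F K ≤ F (K + 1) := F_mono (by omega)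
    omega
  have hhi : ∀ y ∈ t, y ≤ K + 1 := by
    intro y hy
    by_contra hcon
    have h1 : F (K + 2) ≤ F y := F_mono (by omega)
    have h2 := F_mem_le_val hy
    omega
  have hlen : t.length ≤ K := by
    have := length_le_of_strict (List.isChain_iff_pairwise.1 hchain) hge hhi
    omega
  have hlenS : (List.replicate a 1 ++ t).length ≤ K + 1 := by
    rw [List.length_append, List.length_replicate]
    omega
  calc fw (List.replicate a 1 ++ t) ≤ (List.replicate a 1 ++ t).length * val (List.replicate a 1 ++ t) :=
        fw_le_len_mul_val _
    _ ≤ (K + 1) * n := by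
        rw [hval]
        exact Nat.mul_le_mul_right _ hlenS

lemma main_play (K n : ℕ) (hK : 3 ≤ K) (hn : n + 2 < 2 * F K) :
    ∀ fuel S, fw S ≤ fuel →
    (∃ a t, S = List.replicate a 1 ++ t ∧ List.Chain' (· < ·) t ∧ (∀ y ∈ t, 2 ≤ y)) →
    val S = n →
    ∃ T m, PlaysG (Good K) S T m ∧ fw T ≤ (K + 1) * n := by
  intro fuel
  induction fuel with
  | zero =>
    intro S hfw _ hval
    have hS : S = [] := fw_eq_zero (by omega)
    subst hS
    exact ⟨[], 0, PlaysG.refl _ _, by simp [fw]⟩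
  | succ fuel ih =>
    rintro S hfw ⟨a, t, rfl, hchain, hge⟩ hval
    have hvalt : a + val t = n := by
      rw [val_append, val_replicate_one] at hval
      omega
    rcases Nat.lt_or_ge a 2 with ha | ha
    · -- a ≤ 1
      rcases Nat.lt_or_ge a 1 with ha0 | ha1
      · -- a = 0 : stop
        exact ⟨_, 0, PlaysG.refl _ _, stop_bound (by omega) hchain hge hval hn⟩
      · -- a = 1
        have ha1' : a = 1 := by omega
        subst ha1'
        match t, hchain, hge, hval, hvalt with
        | [], _, _, hval, hvalt =>
          exact ⟨_, 0, PlaysG.refl _ _, stop_bound (by omega) (by exact List.isChain_nil) (by simp) hval hn⟩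
        | y :: t₂, hchain, hge, hval, hvalt =>
          rcases Nat.lt_or_ge y 3 with hy2 | hy3
          · -- y = 2 : merge 1,2 → 3 at the front, then cascade
            have hy2' : y = 2 := by have := hge y (by simp); omega
            subst hy2'
            have e1 : List.replicate 1 1 ++ 2 :: t₂ = [1, 2] ++ t₂ := by simp
            rw [e1] at hval hfw ⊢
            have step : Good K ([1, 2] ++ t₂) ([3] ++ t₂) := good_merge12_front K hK t₂
            have hcas := cascade K hK t₂ 3 (by omega) hchain.tail
              (fun z hz => by have := chain'_lt_of_cons hchain z hz; omega)
              (by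
                rw [val_append, val_pair, F_one, F_two] at hval
                have e2 : F 3 = 3 := rfl
                omega)
            obtain ⟨e, t', m', hplay, hchain', hge', _, _⟩ := hcas
            have hplay3 : PlaysG (Good K) ([3] ++ t₂) (List.replicate e 1 ++ t') m' := by
              have : ([3] ++ t₂ : List ℕ) = 3 :: t₂ := by simp
              rw [this]
              exact hplay.mono (fun _ _ hg => hg.toGood)
            have comp := (PlaysG.single step).trans hplay3
            have hm1 : 1 ≤ 1 + m' := by omega
            have hfw1 : fw (List.replicate e 1 ++ t') ≤ fuel := by
              have := comp.good_toMove.fw_le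
              omega
            have hval1 : val (List.replicate e 1 ++ t') = n := by
              have := comp.good_toMove.val_eq
              omega
            obtain ⟨T, m2, hplay2, hT⟩ := ih (List.replicate e 1 ++ t') hfw1
              ⟨e, t', rfl, hchain', hge'⟩ hval1
            exact ⟨T, (1 + m') + m2, comp.trans hplay2, hT⟩
          · -- head ≥ 3 : stop
            exact ⟨_, 0, PlaysG.refl _ _, stop_bound (by omega) hchain hge hval hn⟩
    · -- a ≥ 2 : merge two front ones, transport the 2, cascade
      have e1 : List.replicate a 1 ++ t = [1, 1] ++ (List.replicate (a - 2) 1 ++ t) := by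
        conv_lhs => rw [show a = 2 + (a - 2) from by omega]
        rw [List.replicate_add, List.append_assoc]
        rfl
      rw [e1] at hval hfw ⊢
      have step1 : Good K ([1, 1] ++ (List.replicate (a - 2) 1 ++ t))
          ([2] ++ (List.replicate (a - 2) 1 ++ t)) := good_m1_front K _
      have step2 : PlaysG (GoodL K) ([2] ++ List.replicate (a - 2) 1 ++ t)
          (List.replicate (a - 2) 1 ++ [2] ++ t) (a - 2) := transport2 K (a - 2) t
      have hcas := cascade K hK t 2 le_rfl hchain hge
        (by
          have e2 : F 2 = 2 := rfl
          omega)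
      obtain ⟨e, t', m', hplay, hchain', hge', _, _⟩ := hcas
      have hemb := hplay.embedL (List.replicate (a - 2) 1) []
      simp only [List.append_nil] at hemb
      have e3 : List.replicate (a - 2) 1 ++ [2] ++ t = List.replicate (a - 2) 1 ++ (2 :: t) := by
        simp
      have comp0 : PlaysG (GoodL K) ([2] ++ List.replicate (a - 2) 1 ++ t)
          (List.replicate (a - 2) 1 ++ (List.replicate e 1 ++ t')) ((a - 2) + m') := by
        apply step2.trans
        rw [e3] at *
        exact hemb
      have comp : PlaysG (Good K) ([1, 1] ++ (List.replicate (a - 2) 1 ++ t))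
          (List.replicate ((a - 2) + e) 1 ++ t') (1 + ((a - 2) + m')) := by
        have e5 : ([2] ++ (List.replicate (a - 2) 1 ++ t)) = [2] ++ List.replicate (a - 2) 1 ++ t :=
          (List.append_assoc _ _ _).symm
        rw [e5] at step1
        have h1 := (PlaysG.single step1).trans (comp0.mono (fun _ _ hg => hg.toGood))
        have e4 : List.replicate (a - 2) 1 ++ (List.replicate e 1 ++ t') =
            List.replicate ((a - 2) + e) 1 ++ t' := by
          rw [List.replicate_add, List.append_assoc]
        rw [← e4]
        exact h1
      have hfw1 : fw (List.replicate ((a - 2) + e) 1 ++ t') ≤ fuel := by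
        have := comp.good_toMove.fw_le
        omega
      have hval1 : val (List.replicate ((a - 2) + e) 1 ++ t') = n := by
        have := comp.good_toMove.val_eq
        omega
      obtain ⟨T, m2, hplay2, hT⟩ := ih _ hfw1 ⟨(a - 2) + e, t', rfl, hchain', hge'⟩ hval1
      exact ⟨T, (1 + ((a - 2) + m')) + m2, comp.trans hplay2, hT⟩

/-! ### Natural-number bounds on `M` -/

lemma M_set_nonempty (n : ℕ) :
    {m | ∃ s : ℕ → List ℕ, IsPlay n s m ∧ Terminal (s m)}.Nonempty := by
  obtain ⟨T, m, hplay, hterm⟩ := extend_terminal (List.replicate n 1)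
  exact ⟨m, mem_M_set hplay hterm⟩

lemma M_lower_nat {n K : ℕ} (hK : 3 ≤ K) (hn : n + 2 < 2 * F K) :
    n * (n + 1) ≤ 2 * M n + 6 * K * n := by
  have hS₀ : val (List.replicate n 1) = n := val_replicate_one n
  obtain ⟨T, m₁, hplay, hfwT⟩ := main_play K n hK hn (fw (List.replicate n 1))
    (List.replicate n 1) le_rfl ⟨n, [], by simp, by exact List.isChain_nil, by simp⟩ hS₀
  have hcount := hplay.good_count
  have hPsi : Psi K (List.replicate n 1) = 2 * n * (K - 1) := Psi_replicate_one K n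
  obtain ⟨T₂, m₂, hplay2, hterm⟩ := extend_terminal T
  have htotal : PlaysG Move (List.replicate n 1) T₂ (m₁ + m₂) :=
    hplay.good_toMove.trans hplay2
  have hmem := mem_M_set htotal hterm
  have hle : m₁ + m₂ ≤ M n := le_csSup (M_set_bddAbove n) hmem
  have hfw0 : 2 * fw (List.replicate n 1) = n * (n + 1) := fw_replicate_one n
  have hKn : 2 * ((K + 1) * n) + 2 * (2 * n * (K - 1)) ≤ 6 * K * n := by
    obtain ⟨u, rfl⟩ : ∃ u, K = u + 3 := ⟨K - 3, by omega⟩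
    have e2 : u + 3 - 1 = u + 2 := by omega
    rw [e2]
    ring_nf
    omega
  omega

lemma M_upper_nat {n K : ℕ} (hK : 4 ≤ K) (hFK : 2 * F K ≤ n) :
    24 * M n + (K - 3) * n + 24 * n ≤ 12 * (n * (n + 1)) := by
  have hsup : M n ∈ {m | ∃ s : ℕ → List ℕ, IsPlay n s m ∧ Terminal (s m)} :=
    Nat.sSup_mem (M_set_nonempty n) (M_set_bddAbove n)
  exact lower_nat hK hFK hsup

/-! ### Real-number facts about `phi` -/

lemma phi_gt_one : 1 < phi := by
  have h : (2 : ℝ) ≤ Real.sqrt 5 := by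
    rw [Real.le_sqrt (by norm_num) (by norm_num)]
    norm_num
  rw [phi]
  linarith

lemma phi_lt_two : phi < 2 := by
  have h : Real.sqrt 5 < 3 := by
    rw [Real.sqrt_lt' (by norm_num)]
    norm_num
  rw [phi]
  linarith

lemma log_phi_pos : 0 < Real.log phi := Real.log_pos phi_gt_one

lemma log_phi_lt_log_two : Real.log phi < Real.log 2 :=
  Real.log_lt_log (by linarith [phi_gt_one]) phi_lt_two

theorem stmt_18 :
    ∃ c₁ c₂ : ℝ, 0 < c₁ ∧ 0 < c₂ ∧ ∃ N : ℕ, ∀ n : ℕ, N ≤ n →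
      c₁ * n * logphi n ≤ (n : ℝ) ^ 2 / 2 - (M n : ℝ) ∧
      (n : ℝ) ^ 2 / 2 - (M n : ℝ) ≤ c₂ * n * logphi n := by
  have hl2 : (0:ℝ) < Real.log 2 := Real.log_pos (by norm_num)
  have hlphi := log_phi_pos
  have hlt := log_phi_lt_log_two
  refine ⟨Real.log phi / (100 * Real.log 2), 7, by positivity, by norm_num, 4096, ?_⟩
  intro n hn
  set L := Nat.log 2 n with hL
  have hn0 : n ≠ 0 := by omega
  have hn1 : (1:ℝ) ≤ (n:ℝ) := by exact_mod_cast Nat.one_le_iff_ne_zero.2 hn0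
  have hL12 : 12 ≤ L := by
    rw [hL, Nat.le_log_iff_pow_le (by norm_num) hn0]
    norm_num
    omega
  have hpowle : 2 ^ L ≤ n := Nat.pow_log_le_self 2 hn0
  have hltpow : n < 2 ^ (L + 1) := Nat.lt_pow_succ_log_self (by norm_num) n
  -- real log bounds
  have hlnn_ge : (L : ℝ) * Real.log 2 ≤ Real.log n := by
    have h1 : ((2:ℝ) ^ L) ≤ (n:ℝ) := by exact_mod_cast hpowle
    have h2 := Real.log_le_log (by positivity) h1
    rwa [Real.log_pow] at h2
  have hlnn_le : Real.log n ≤ ((L : ℝ) + 1) * Real.log 2 := by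
    have h1 : (n:ℝ) ≤ ((2:ℝ) ^ (L+1)) := by
      have : (n:ℝ) < ((2:ℕ) ^ (L+1) : ℕ) := by exact_mod_cast hltpow
      push_cast at this
      linarith
    have h2 := Real.log_le_log (by linarith) h1
    rw [Real.log_pow] at h2
    push_cast at h2
    linarith
  have hlogphi_n : logphi n = Real.log n / Real.log phi := rfl
  have hlogphi_nonneg : 0 ≤ logphi n := by
    rw [hlogphi_n]
    have := Real.log_nonneg hn1
    positivity
  have hlog2phi : Real.log n / Real.log 2 ≤ logphi n := by
    rw [hlogphi_n]
    apply div_le_div_of_nonneg_left (Real.log_nonneg hn1) hlphi (le_of_lt hlt)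
  have hL_le : (L : ℝ) ≤ logphi n := by
    have h1 : (L : ℝ) ≤ Real.log n / Real.log 2 := by
      rw [le_div_iff₀ hl2]
      linarith
    linarith
  have h12_le : (12 : ℝ) ≤ logphi n := by
    have : (12 : ℝ) ≤ (L : ℝ) := by exact_mod_cast hL12
    linarith
  constructor
  · -- lower bound: c₁ n logphi n ≤ n²/2 - M n
    have hK4 : 4 ≤ L - 1 := by omega
    have hFK : 2 * F (L - 1) ≤ n := by
      have h1 : F (L - 1) ≤ 2 ^ (L - 1) := F_le_two_pow (L - 1)
      have h2 : 2 * 2 ^ (L - 1) = 2 ^ L := by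
        rw [← pow_succ']
        congr 1
        omega
      omega
    have hnat := M_upper_nat hK4 hFK
    have hK3 : L - 1 - 3 = L - 4 := by omega
    rw [hK3] at hnat
    -- cast to ℝ
    have hcast : 24 * (M n : ℝ) + ((L:ℝ) - 4) * n + 24 * n ≤ 12 * (n * (n + 1)) := by
      have e : ((L:ℝ) - 4) = ((L - 4 : ℕ) : ℝ) := by
        rw [Nat.cast_sub (by omega)]
        norm_num
      rw [e]
      exact_mod_cast hnat
    have hmain : (n:ℝ)^2 / 2 - M n ≥ ((L:ℝ) - 4) * n / 24 := by nlinarith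
    have hc1 : Real.log phi / (100 * Real.log 2) * n * logphi n ≤ ((L:ℝ) - 4) * n / 24 := by
      rw [hlogphi_n]
      have e1 : Real.log phi / (100 * Real.log 2) * n * (Real.log n / Real.log phi) =
          (n * Real.log n) / (100 * Real.log 2) := by
        field_simp
      rw [e1]
      rw [div_le_div_iff₀ (by positivity) (by norm_num)]
      -- n ln n * 24 ≤ (L-4) n * (100 ln 2)
      have h1 : Real.log n ≤ ((L:ℝ) + 1) * Real.log 2 := hlnn_le
      have h2 : (24 : ℝ) * ((L:ℝ) + 1) ≤ 100 * ((L:ℝ) - 4) := by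
        have : (12 : ℝ) ≤ (L : ℝ) := by exact_mod_cast hL12
        linarith
      have hn_nonneg : (0:ℝ) ≤ (n:ℝ) := by linarith
      have s1 : (n:ℝ) * Real.log n ≤ (n:ℝ) * (((L:ℝ) + 1) * Real.log 2) :=
        mul_le_mul_of_nonneg_left h1 hn_nonneg
      have s2 : (n:ℝ) * (((L:ℝ) + 1) * Real.log 2) * 24 ≤ ((L:ℝ) - 4) * n * (100 * Real.log 2) := by
        nlinarith [mul_nonneg (mul_nonneg hn_nonneg hl2.le)
          (by linarith : (0:ℝ) ≤ 100 * ((L:ℝ) - 4) - 24 * ((L:ℝ) + 1))]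
      linarith
    linarith
  · -- upper bound: n²/2 - M n ≤ 7 n logphi n
    have hK := M_lower_nat (n := n) (K := 2 * L + 4) (by omega) (by
      have h1 : 2 ^ (L + 2) ≤ F (2 * (L + 2)) := two_pow_le_F (L + 2)
      have h2 : 2 * (L + 2) = 2 * L + 4 := by ring
      rw [h2] at h1
      have h3 : 2 ^ (L + 2) = 2 * 2 ^ (L + 1) := by ring
      have h4 := F_pos (2 * L + 4)
      omega)
    -- n(n+1) ≤ 2 M n + 6 (2L+4) n
    have hcast : (n:ℝ) * (n + 1) ≤ 2 * M n + (12 * (L:ℝ) + 24) * n := by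
      have e : (6 * (2 * L + 4) * n : ℕ) = ((12 * L + 24) * n : ℕ) := by ring
      rw [e] at hK
      exact_mod_cast hK
    have hmain : (n:ℝ)^2 / 2 - M n ≤ (6 * (L:ℝ) + 12) * n := by nlinarith
    have hfinal : (6 * (L:ℝ) + 12) * n ≤ 7 * n * logphi n := by
      have h1 : 6 * (L:ℝ) + 12 ≤ 7 * logphi n := by
        have h2 : 6 * (L:ℝ) ≤ 6 * logphi n := by linarith
        linarith
      nlinarith
    linarith
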